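/- Let G be a group acting linearly on V, and suppose λ : kG ⊗ V → kG is the first-order parameter of a graded deformation of S(V)#G, so that λ satisfies Conditions (1) and (3) of Theorem 2.1. If for some g, h ∈ G the linear map v ↦ h·v − g·v on V has rank exactly 1 with kernel K, then the functional λ_h(g,·) vanishes on K; that is, λ_h(g,·) is supported off the 'reflecting hyperplane' K of h⁻¹g. -/

import Mathlib

/-- If `λ` satisfies Conditions (1) and (3) of Theorem 2.1 and the map
`v ↦ h·v − g·v` has rank exactly 1 with kernel `K`, then the coefficient
functional `λ_h(g,·)` vanishes on `K`. -/
theorem stmt16 {k G V : Type*} [Field k] [Group G]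
    [AddCommGroup V] [Module k V] [FiniteDimensional k V]
    (ρ : Representation k G V)
    (lam : G → V →ₗ[k] MonoidAlgebra k G)
    (hcoc : ∀ (g h : G) (v : V),
      lam (g * h) v
        = lam g (ρ h v) * MonoidAlgebra.single h (1 : k)
          + MonoidAlgebra.single g (1 : k) * lam h v)
    (hcond3 : ∀ (g h : G) (u v : V),
      ((lam g v).coeff h) • (ρ h u - ρ g u) = ((lam g u).coeff h) • (ρ h v - ρ g v))
    (g h : G)
    (hrank : Module.finrank k (LinearMap.range (ρ h - ρ g)) = 1) :
    ∀ v ∈ LinearMap.ker (ρ h - ρ g), (lam g v).coeff h = 0 := by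
  intro v hv
  rw [LinearMap.mem_ker] at hv
  -- since rank is 1, the map ρ h - ρ g is nonzero
  obtain ⟨u, hu⟩ : ∃ u, (ρ h - ρ g) u ≠ 0 := by
    by_contra hall
    push_neg at hall
    have : (ρ h - ρ g) = 0 := LinearMap.ext fun x => hall x
    rw [this, LinearMap.range_zero, finrank_bot] at hrank; exact one_ne_zero hrank.symm
  have key := hcond3 g h u v
  have hv' : ρ h v - ρ g v = 0 := by simpa [LinearMap.sub_apply] using hv
  rw [hv', smul_zero] at key
  have hu' : ρ h u - ρ g u ≠ 0 := by simpa [LinearMap.sub_apply] using hu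
  rcases smul_eq_zero.mp key with h1 | h2
  · exact h1
  · exact absurd h2 hu'
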